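/- The map σ ↦ σ/τ(σ) is strictly increasing on each interval (1/ρ_{ℓ+1}, 1/ρ_ℓ] and on (1/2, 1], and is (weakly) increasing on all of (0,1]. -/

import Mathlib

/-- The "magic sequence" ρ_ℓ = 1 + ℓ(ℓ+1)/2, as a real number. -/
noncomputable def rho (l : ℕ) : ℝ := 1 + (l : ℝ) * ((l : ℝ) + 1) / 2

/-- `IsTau tau` expresses that `tau` is the tradeoff function of Dinur et al.:
`tau σ = 1/2` for `σ > 1/2`, and `tau σ = 1 - 1/(ℓ+1) - σ(ρ_ℓ-2)/(ℓ+1)`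
where `ℓ ≥ 1` is the unique integer with `1/ρ_{ℓ+1} < σ ≤ 1/ρ_ℓ`. -/
def IsTau (tau : ℝ → ℝ) : Prop :=
  (∀ σ : ℝ, 1 / 2 < σ → σ ≤ 1 → tau σ = 1 / 2) ∧
  (∀ σ : ℝ, 0 < σ → σ ≤ 1 / 2 → ∀ l : ℕ, 1 ≤ l →
    1 / rho (l + 1) < σ → σ ≤ 1 / rho l →
    tau σ = 1 - 1 / ((l : ℝ) + 1) - σ * (rho l - 2) / ((l : ℝ) + 1))

/-- Value of `σ/τ(σ)` on the piece indexed by `l`. -/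
noncomputable def gfun (l : ℕ) (σ : ℝ) : ℝ :=
  σ * ((l : ℝ) + 1) / ((l : ℝ) - σ * (rho l - 2))

lemma rho_pos (l : ℕ) : 0 < rho l := by unfold rho; positivity

lemma rho_ge_two {l : ℕ} (hl : 1 ≤ l) : (2 : ℝ) ≤ rho l := by
  have h : (1 : ℝ) ≤ (l : ℝ) := by exact_mod_cast hl
  unfold rho; nlinarith

lemma rho_lt_succ (l : ℕ) : rho l < rho (l + 1) := by
  unfold rho; push_cast; nlinarith [Nat.cast_nonneg (α := ℝ) l]

lemma one_div_rho_succ_lt (l : ℕ) : 1 / rho (l + 1) < 1 / rho l :=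
  one_div_lt_one_div_of_lt (rho_pos l) (rho_lt_succ l)

lemma one_div_rho_le_half {l : ℕ} (hl : 1 ≤ l) : 1 / rho l ≤ 1 / 2 :=
  one_div_le_one_div_of_le (by norm_num) (rho_ge_two hl)

lemma denom_pos {l : ℕ} (hl : 1 ≤ l) {σ : ℝ} (h0 : 0 < σ) (h1 : σ ≤ 1 / rho l) :
    0 < (l : ℝ) - σ * (rho l - 2) := by
  have hρ := rho_pos l
  have h2 := rho_ge_two hl
  have hσρ : σ * rho l ≤ 1 := by
    rw [le_div_iff₀ hρ] at h1; exact h1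
  have hl1 : (1 : ℝ) ≤ (l : ℝ) := by exact_mod_cast hl
  nlinarith

lemma gfun_lt {l : ℕ} (hl : 1 ≤ l) {σ1 σ2 : ℝ} (h0 : 0 < σ1) (h12 : σ1 < σ2)
    (h2 : σ2 ≤ 1 / rho l) : gfun l σ1 < gfun l σ2 := by
  have d1 := denom_pos hl h0 (h12.le.trans h2)
  have d2 := denom_pos hl (h0.trans h12) h2
  have hc : (0 : ℝ) ≤ rho l - 2 := by linarith [rho_ge_two hl]
  have hl1 : (1 : ℝ) ≤ (l : ℝ) := by exact_mod_cast hl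
  unfold gfun
  rw [div_lt_div_iff₀ d1 d2]
  nlinarith [mul_pos (sub_pos.2 h12) (show (0:ℝ) < (l:ℝ) * ((l:ℝ) + 1) by nlinarith)]

lemma gfun_le {l : ℕ} (hl : 1 ≤ l) {σ1 σ2 : ℝ} (h0 : 0 < σ1) (h12 : σ1 ≤ σ2)
    (h2 : σ2 ≤ 1 / rho l) : gfun l σ1 ≤ gfun l σ2 := by
  rcases eq_or_lt_of_le h12 with h | h
  · rw [h]
  · exact (gfun_lt hl h0 h h2).le

lemma gfun_le_one {l : ℕ} (hl : 1 ≤ l) {σ : ℝ} (h0 : 0 < σ) (h1 : σ ≤ 1 / rho l) :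
    gfun l σ ≤ 1 := by
  have hd := denom_pos hl h0 h1
  have hρ := rho_pos l
  have h2 := rho_ge_two hl
  have hσρ : σ * rho l ≤ 1 := by rw [le_div_iff₀ hρ] at h1; exact h1
  have hl1 : (1 : ℝ) ≤ (l : ℝ) := by exact_mod_cast hl
  unfold gfun
  rw [div_le_one hd]
  nlinarith [mul_nonneg h0.le (sub_nonneg.2 hl1)]

lemma tau_piece {tau : ℝ → ℝ} (htau : IsTau tau) {l : ℕ} (hl : 1 ≤ l) {σ : ℝ}
    (hlo : 1 / rho (l + 1) < σ) (hhi : σ ≤ 1 / rho l) :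
    σ / tau σ = gfun l σ := by
  have h0 : 0 < σ := lt_trans (one_div_pos.mpr (rho_pos _)) hlo
  have h2 : σ ≤ 1 / 2 := hhi.trans (one_div_rho_le_half hl)
  have ht := htau.2 σ h0 h2 l hl hlo hhi
  have hd := denom_pos hl h0 hhi
  have hL : (0 : ℝ) < (l : ℝ) + 1 := by
    have := Nat.cast_nonneg (α := ℝ) l; linarith
  rw [ht, show 1 - 1 / ((l : ℝ) + 1) - σ * (rho l - 2) / ((l : ℝ) + 1)
      = ((l : ℝ) - σ * (rho l - 2)) / ((l : ℝ) + 1) by field_simp; ring,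
    div_div_eq_mul_div]
  rfl

lemma gfun_cont {l : ℕ} (hl : 1 ≤ l) :
    gfun (l + 1) (1 / rho (l + 1)) = gfun l (1 / rho (l + 1)) := by
  have hR := rho_pos (l + 1)
  have h0 : (0 : ℝ) < 1 / rho (l + 1) := by positivity
  have d2 := denom_pos (Nat.le_succ_of_le hl) h0 (le_refl _)
  have d1 := denom_pos hl h0 (one_div_rho_succ_lt l).le
  unfold gfun
  rw [div_eq_div_iff d2.ne' d1.ne']
  have hdef : rho (l + 1) = 1 + ((l : ℝ) + 1) * ((l : ℝ) + 2) / 2 := by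
    unfold rho; push_cast; ring
  have hdef' : rho l = 1 + (l : ℝ) * ((l : ℝ) + 1) / 2 := rfl
  rw [hdef', hdef] at *
  push_cast
  field_simp
  ring

lemma exists_ell {σ : ℝ} (h0 : 0 < σ) (h2 : σ ≤ 1 / 2) :
    ∃ l : ℕ, 1 ≤ l ∧ 1 / rho (l + 1) < σ ∧ σ ≤ 1 / rho l := by
  classical
  have hx : ∃ n : ℕ, 1 / σ < rho (n + 1) := by
    obtain ⟨n, hn⟩ := exists_nat_gt (1 / σ)
    refine ⟨n, hn.trans_le ?_⟩
    unfold rho; push_cast; nlinarith [Nat.cast_nonneg (α := ℝ) n]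
  have hfind : 1 / σ < rho (Nat.find hx + 1) := Nat.find_spec hx
  have hinv : (2 : ℝ) ≤ 1 / σ := by
    rw [le_div_iff₀ h0]; linarith
  have hl : 1 ≤ Nat.find hx := by
    rcases Nat.eq_zero_or_pos (Nat.find hx) with h | h
    · exfalso
      rw [h] at hfind
      have : rho (0 + 1) = 2 := by unfold rho; norm_num
      rw [this] at hfind; linarith
    · exact h
  refine ⟨Nat.find hx, hl, ?_, ?_⟩
  · have h1 : 1 < rho (Nat.find hx + 1) * σ := (div_lt_iff₀ h0).mp hfind
    rw [div_lt_iff₀ (rho_pos _)]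
    nlinarith
  · have hmin := Nat.find_min hx (show Nat.find hx - 1 < Nat.find hx from
      Nat.sub_lt hl one_pos)
    rw [Nat.sub_add_cancel hl] at hmin
    push_neg at hmin
    rw [le_div_iff₀ (rho_pos _)]
    have := rho_pos (Nat.find hx)
    nlinarith [(le_div_iff₀ h0).mp hmin]

lemma M_anti {l2 l1 : ℕ} (h2 : 1 ≤ l2) (h12 : l2 ≤ l1) :
    gfun l1 (1 / rho l1) ≤ gfun l2 (1 / rho l2) := by
  induction l1, h12 using Nat.le_induction with
  | base => exact le_refl _
  | succ n hn ih =>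
    have hn1 : 1 ≤ n := h2.trans hn
    calc gfun (n + 1) (1 / rho (n + 1)) = gfun n (1 / rho (n + 1)) := gfun_cont hn1
      _ ≤ gfun n (1 / rho n) :=
          gfun_le hn1 (one_div_pos.mpr (rho_pos _)) (one_div_rho_succ_lt n).le (le_refl _)
      _ ≤ gfun l2 (1 / rho l2) := ih

theorem sigma_div_tau_mono (tau : ℝ → ℝ) (htau : IsTau tau) :
    (∀ l : ℕ, 1 ≤ l →
      StrictMonoOn (fun σ => σ / tau σ) (Set.Ioc (1 / rho (l + 1)) (1 / rho l))) ∧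
    StrictMonoOn (fun σ => σ / tau σ) (Set.Ioc (1 / 2 : ℝ) 1) ∧
    MonotoneOn (fun σ => σ / tau σ) (Set.Ioc (0 : ℝ) 1) := by
  -- on (1/2, 1] the map is σ ↦ 2σ
  have htop : ∀ σ : ℝ, 1 / 2 < σ → σ ≤ 1 → σ / tau σ = 2 * σ := by
    intro σ h1 h2
    rw [htau.1 σ h1 h2]
    field_simp
  refine ⟨?_, ?_, ?_⟩
  · -- strict monotonicity on each piece
    intro l hl a ha b hb hab
    simp only
    rw [tau_piece htau hl ha.1 ha.2, tau_piece htau hl hb.1 hb.2]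
    exact gfun_lt hl (lt_trans (one_div_pos.mpr (rho_pos _)) ha.1) hab hb.2
  · -- strict monotonicity on (1/2, 1]
    intro a ha b hb hab
    simp only
    rw [htop a ha.1 ha.2, htop b hb.1 hb.2]
    linarith
  · -- monotonicity on (0, 1]
    intro a ha b hb hab
    rcases eq_or_lt_of_le hab with rfl | hab
    · exact le_refl _
    simp only
    rcases le_or_gt a (1 / 2) with ha2 | ha2
    · -- a ≤ 1/2 : pick its piece
      obtain ⟨l1, hl1, hlo1, hhi1⟩ := exists_ell ha.1 ha2
      rw [tau_piece htau hl1 hlo1 hhi1]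
      rcases le_or_gt b (1 / 2) with hb2 | hb2
      · -- b ≤ 1/2 : pick its piece
        obtain ⟨l2, hl2, hlo2, hhi2⟩ := exists_ell (ha.1.trans hab) hb2
        rw [tau_piece htau hl2 hlo2 hhi2]
        -- l2 ≤ l1
        have hle : l2 ≤ l1 := by
          by_contra h
          push_neg at h
          have h1 : l1 + 1 ≤ l2 := h
          have : 1 / rho l2 ≤ 1 / rho (l1 + 1) := by
            rcases eq_or_lt_of_le h1 with rfl | hlt
            · exact le_refl _
            · refine (one_div_le_one_div_of_le (rho_pos _) ?_)
              -- rho (l1+1) ≤ rho l2 by monotonicity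
              have : ∀ m k : ℕ, m ≤ k → rho m ≤ rho k := by
                intro m k hmk
                induction k, hmk using Nat.le_induction with
                | base => exact le_refl _
                | succ n _ ih => exact ih.trans (rho_lt_succ n).le
              exact this _ _ h1
          linarith [hhi2.trans this]
        rcases eq_or_lt_of_le hle with rfl | hlt
        · exact gfun_le hl2 (lt_trans (one_div_pos.mpr (rho_pos _)) hlo1) hab.le hhi2
        · -- l2 < l1 : chain through the endpoints
          have h01 : 0 < a := ha.1
          calc gfun l1 a ≤ gfun l1 (1 / rho l1) := gfun_le hl1 h01 hhi1 (le_refl _)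
            _ ≤ gfun (l2 + 1) (1 / rho (l2 + 1)) := M_anti (by omega) hlt
            _ = gfun l2 (1 / rho (l2 + 1)) := gfun_cont hl2
            _ ≤ gfun l2 b := gfun_le hl2 (one_div_pos.mpr (rho_pos _)) hlo2.le hhi2
      · -- b > 1/2
        rw [htop b hb2 hb.2]
        have := gfun_le_one hl1 ha.1 hhi1
        linarith
    · -- a > 1/2, hence b > 1/2 too
      rw [htop a ha2 ha.2, htop b (ha2.trans hab) hb.2]
      linarith
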